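/- Let V be a finite-dimensional representation of 𝔰𝔩₂(ℂ) with standard basis X, Y, H ([X,Y]=H, [H,X]=2X, [H,Y]=−2Y). For each integer m let V_m denote the H-eigenspace with eigenvalue m. Then for every integer m ≥ 0, the map Y^m : V_m → V_{−m} is a linear isomorphism. -/

import Mathlib

open Module Module.End

namespace SL2p

universe u
variable {V : Type u} [AddCommGroup V] [Module ℂ V]

lemma memY {Y H : Module.End ℂ V} (hHY : H * Y - Y * H = -(2 • Y))
    {μ : ℂ} {v : V} (hv : v ∈ eigenspace H μ) : Y v ∈ eigenspace H (μ - 2) := by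
  rw [mem_eigenspace_iff] at hv ⊢
  have h := LinearMap.ext_iff.mp hHY v
  simp only [LinearMap.sub_apply, Module.End.mul_apply, LinearMap.neg_apply,
    LinearMap.smul_apply] at h
  have h2 : (2 : ℕ) • Y v = (2 : ℂ) • Y v := by rw [two_nsmul, two_smul]
  rw [sub_eq_iff_eq_add] at h
  rw [h, hv, map_smul, h2]
  module

lemma memX {X H : Module.End ℂ V} (hHX : H * X - X * H = 2 • X)
    {μ : ℂ} {v : V} (hv : v ∈ eigenspace H μ) : X v ∈ eigenspace H (μ + 2) := by
  rw [mem_eigenspace_iff] at hv ⊢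
  have h := LinearMap.ext_iff.mp hHX v
  simp only [LinearMap.sub_apply, Module.End.mul_apply, LinearMap.smul_apply] at h
  have h2 : (2 : ℕ) • X v = (2 : ℂ) • X v := by
    rw [two_nsmul, two_smul]
  rw [sub_eq_iff_eq_add] at h
  rw [h, hv, map_smul, h2]
  module

lemma memYpow {Y H : Module.End ℂ V} (hHY : H * Y - Y * H = -(2 • Y))
    {μ : ℂ} {v : V} (hv : v ∈ eigenspace H μ) (k : ℕ) :
    (Y ^ k) v ∈ eigenspace H (μ - 2 * k) := by
  induction k with
  | zero => simpa using hv
  | succ k ih =>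
    have := memY hHY ih
    have e : μ - 2 * (k + 1 : ℕ) = (μ - 2 * k) - 2 := by push_cast; ring
    rw [e, pow_succ', Module.End.mul_apply]
    exact this

lemma memXpow {X H : Module.End ℂ V} (hHX : H * X - X * H = 2 • X)
    {μ : ℂ} {v : V} (hv : v ∈ eigenspace H μ) (k : ℕ) :
    (X ^ k) v ∈ eigenspace H (μ + 2 * k) := by
  induction k with
  | zero => simpa using hv
  | succ k ih =>
    have := memX hHX ih
    have e : μ + 2 * (k + 1 : ℕ) = (μ + 2 * k) + 2 := by push_cast; ring
    rw [e, pow_succ', Module.End.mul_apply]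
    exact this

-- primitive vector action formula
lemma xpow {X Y H : Module.End ℂ V} (hXY : X * Y - Y * X = H)
    (hHY : H * Y - Y * H = -(2 • Y))
    {lam : ℂ} {u : V} (hu : u ∈ eigenspace H lam) (hXu : X u = 0) (k : ℕ) :
    X ((Y ^ (k + 1)) u) = (((k : ℂ) + 1) * (lam - k)) • (Y ^ k) u := by
  have hxy : ∀ w : V, X (Y w) = Y (X w) + H w := by
    intro w
    have h := LinearMap.ext_iff.mp hXY w
    simp only [LinearMap.sub_apply, Module.End.mul_apply] at h
    rw [sub_eq_iff_eq_add] at h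
    rw [h]; abel
  induction k with
  | zero =>
    rw [mem_eigenspace_iff] at hu
    simp only [zero_add, pow_one, pow_zero, Module.End.one_apply, Nat.cast_zero]
    rw [hxy u, hXu, map_zero, zero_add, hu]
    ring_nf
  | succ k ih =>
    have hmem : (Y ^ (k + 1)) u ∈ eigenspace H (lam - 2 * (k + 1 : ℕ)) := memYpow hHY hu (k + 1)
    rw [mem_eigenspace_iff] at hmem
    have e1 : (Y ^ (k + 2)) u = Y ((Y ^ (k + 1)) u) := by
      rw [pow_succ', Module.End.mul_apply]
    rw [e1, hxy, ih, map_smul, hmem]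
    have e2 : (Y ^ (k + 1)) u = Y ((Y ^ k) u) := by rw [pow_succ', Module.End.mul_apply]
    rw [← e2]
    rw [← add_smul]
    congr 1
    push_cast
    ring

lemma exists_pow_zero [FiniteDimensional ℂ V] (T H : Module.End ℂ V) (c : ℂ) (hc : c ≠ 0)
    (hstep : ∀ (μ' : ℂ) (w : V), w ∈ eigenspace H μ' → T w ∈ eigenspace H (μ' + c))
    {μ : ℂ} {v : V} (hv : v ∈ eigenspace H μ) : ∃ k : ℕ, (T ^ k) v = 0 := by
  by_contra h
  push_neg at h
  have hmem : ∀ k : ℕ, (T ^ k) v ∈ eigenspace H (μ + k * c) := by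
    intro k
    induction k with
    | zero => simpa using hv
    | succ k ih =>
      have := hstep _ _ ih
      have e : μ + (k + 1 : ℕ) * c = (μ + k * c) + c := by push_cast; ring
      rw [e, pow_succ', Module.End.mul_apply]
      exact this
  have hinj : Function.Injective (fun k : ℕ => μ + k * c) := by
    intro a b hab
    simp only [add_right_injective, add_right_inj] at hab
    have : (a : ℂ) = b := mul_right_cancel₀ hc hab
    exact_mod_cast this
  have li := H.eigenvectors_linearIndependent' (fun k : ℕ => μ + k * c) hinj
    (fun k => (T ^ k) v) (fun k => ⟨hmem k, h k⟩)
  haveI := li.finite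
  exact not_finite ℕ

lemma string [FiniteDimensional ℂ V] {X Y H : Module.End ℂ V}
    (hXY : X * Y - Y * X = H) (hHY : H * Y - Y * H = -(2 • Y))
    {lam : ℂ} {u : V} (hu0 : u ≠ 0) (hu : u ∈ eigenspace H lam) (hXu : X u = 0) :
    ∃ n : ℕ, lam = n ∧ (∀ i ≤ n, (Y ^ i) u ≠ 0) ∧ (Y ^ (n + 1)) u = 0 := by
  have hstep : ∀ (μ' : ℂ) (w : V), w ∈ eigenspace H μ' → Y w ∈ eigenspace H (μ' + (-2)) := by
    intro μ' w hw
    have := memY hHY hw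
    simpa [sub_eq_add_neg] using this
  obtain ⟨k0, hk0⟩ := exists_pow_zero Y H (-2) (by norm_num) hstep hu
  have hex : ∃ k : ℕ, (Y ^ k) u = 0 := ⟨k0, hk0⟩
  classical
  have hkspec := Nat.find_spec hex
  have hkpos : Nat.find hex ≠ 0 := by
    intro h0
    rw [h0] at hkspec
    simp at hkspec
    exact hu0 hkspec
  obtain ⟨n, hn⟩ : ∃ n, Nat.find hex = n + 1 :=
    ⟨Nat.find hex - 1, (Nat.succ_pred_eq_of_pos (Nat.pos_of_ne_zero hkpos)).symm⟩
  rw [hn] at hkspec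
  have hne : ∀ i ≤ n, (Y ^ i) u ≠ 0 := by
    intro i hi
    exact Nat.find_min hex (by omega)
  refine ⟨n, ?_, hne, hkspec⟩
  have := xpow hXY hHY hu hXu n
  rw [hkspec, map_zero] at this
  have hnz : (Y ^ n) u ≠ 0 := hne n le_rfl
  have := (smul_eq_zero.mp this.symm).resolve_right hnz
  have h1 : ((n : ℂ) + 1) ≠ 0 := Nat.cast_add_one_ne_zero n
  have := (mul_eq_zero.mp this).resolve_left h1
  exact sub_eq_zero.mp this

lemma inj_aux : ∀ (N : ℕ) {V : Type u} [AddCommGroup V] [Module ℂ V] [FiniteDimensional ℂ V]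
    (X Y H : Module.End ℂ V),
    X * Y - Y * X = H → H * X - X * H = 2 • X → H * Y - Y * H = -(2 • Y) →
    Module.finrank ℂ V ≤ N →
    ∀ (m : ℕ) (v : V), v ∈ eigenspace H (m : ℂ) → (Y ^ m) v = 0 → v = 0 := by
  intro N
  induction N with
  | zero =>
    intro V _ _ _ X Y H hXY hHX hHY hrk m v hv hYv
    have h0 : Module.finrank ℂ V = 0 := le_antisymm hrk (Nat.zero_le _)
    haveI : Subsingleton V := Module.finrank_zero_iff.mp h0
    exact Subsingleton.elim v 0
  | succ N IH =>
    intro V _ _ _ X Y H hXY hHX hHY hrk m v hv hYv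
    classical
    by_cases hVtriv : Subsingleton V
    · exact Subsingleton.elim v 0
    haveI : Nontrivial V := not_subsingleton_iff_nontrivial.mp hVtriv
    obtain ⟨μ0, hμ0⟩ := Module.End.exists_eigenvalue H
    obtain ⟨v0, hv0⟩ := hμ0.exists_hasEigenvector
    have hv0mem : v0 ∈ eigenspace H μ0 := hv0.1
    have hv00 : v0 ≠ 0 := hv0.2
    -- find a primitive vector
    have hex : ∃ j : ℕ, (X ^ j) v0 = 0 :=
      exists_pow_zero X H 2 two_ne_zero (fun μ' w hw => memX hHX hw) hv0mem
    have hspec := Nat.find_spec hex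
    have hjpos : Nat.find hex ≠ 0 := by
      intro h0
      rw [h0] at hspec
      simp at hspec
      exact hv00 hspec
    obtain ⟨j, hj⟩ : ∃ j, Nat.find hex = j + 1 :=
      ⟨Nat.find hex - 1, (Nat.succ_pred_eq_of_pos (Nat.pos_of_ne_zero hjpos)).symm⟩
    rw [hj] at hspec
    set u := (X ^ j) v0 with hudef
    have hXu : X u = 0 := by
      rw [hudef, ← Module.End.mul_apply, ← pow_succ']
      exact hspec
    have hu0 : u ≠ 0 := Nat.find_min hex (by omega)
    have humem : u ∈ eigenspace H (μ0 + 2 * j) := memXpow hHX hv0mem j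
    obtain ⟨n, hlam, hne, hzero⟩ := string hXY hHY hu0 humem hXu
    have humem' : u ∈ eigenspace H (n : ℂ) := by rwa [hlam] at humem
    -- the string submodule W
    set w : Fin (n + 1) → V := fun i => (Y ^ (i : ℕ)) u with hwdef
    set W : Submodule ℂ V := Submodule.span ℂ (Set.range w) with hWdef
    have hwmem : ∀ i : ℕ, i ≤ n → (Y ^ i) u ∈ W := by
      intro i hi
      exact Submodule.subset_span ⟨⟨i, by omega⟩, rfl⟩
    have hwe : ∀ i : ℕ, (Y ^ i) u ∈ eigenspace H ((n : ℂ) - 2 * i) :=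
      fun i => memYpow hHY humem' i
    -- invariance of W
    have hYW : W ≤ W.comap Y := by
      rw [hWdef, Submodule.span_le]
      rintro x ⟨i, rfl⟩
      show Y (w i) ∈ W
      have hYw : Y (w i) = (Y ^ ((i : ℕ) + 1)) u := by
        rw [hwdef, pow_succ', Module.End.mul_apply]
      by_cases hin : (i : ℕ) = n
      · rw [hYw, hin, hzero]
        exact W.zero_mem
      · rw [hYw]
        exact hwmem _ (by have := i.is_le; omega)
    have hHW : W ≤ W.comap H := by
      rw [hWdef, Submodule.span_le]
      rintro x ⟨i, rfl⟩
      show H (w i) ∈ W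
      have := mem_eigenspace_iff.mp (hwe (i : ℕ))
      rw [hwdef]
      rw [this]
      exact W.smul_mem _ (hwmem _ i.is_le)
    have hXW : W ≤ W.comap X := by
      rw [hWdef, Submodule.span_le]
      rintro x ⟨i, rfl⟩
      show X (w i) ∈ W
      rcases Nat.eq_zero_or_eq_succ_pred (i : ℕ) with h0 | hsucc
      · rw [hwdef]
        simp only [h0, pow_zero, Module.End.one_apply]
        rw [hXu]
        exact W.zero_mem
      · rw [hwdef]
        simp only
        rw [hsucc, xpow hXY hHY humem' hXu]
        exact W.smul_mem _ (hwmem _ (by have := i.is_le; omega))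
    -- quotient
    set Xq := W.mapQ W X hXW with hXqdef
    set Yq := W.mapQ W Y hYW with hYqdef
    set Hq := W.mapQ W H hHW with hHqdef
    have happ : ∀ (f : Module.End ℂ V) (hf : W ≤ W.comap f) (x : V),
        (W.mapQ W f hf) (W.mkQ x) = W.mkQ (f x) := by
      intro f hf x
      rw [Submodule.mkQ_apply, Submodule.mapQ_apply, Submodule.mkQ_apply]
    have pXY : ∀ x : V, X (Y x) - Y (X x) = H x := by
      intro x
      have h := LinearMap.ext_iff.mp hXY x
      simpa [LinearMap.sub_apply, Module.End.mul_apply] using h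
    have pHX : ∀ x : V, H (X x) - X (H x) = (2 : ℕ) • X x := by
      intro x
      have h := LinearMap.ext_iff.mp hHX x
      simpa [LinearMap.sub_apply, Module.End.mul_apply] using h
    have pHY : ∀ x : V, H (Y x) - Y (H x) = -((2 : ℕ) • Y x) := by
      intro x
      have h := LinearMap.ext_iff.mp hHY x
      simpa [LinearMap.sub_apply, Module.End.mul_apply] using h
    have hXYq : Xq * Yq - Yq * Xq = Hq := by
      apply Submodule.linearMap_qext
      ext x
      simp only [LinearMap.comp_apply, LinearMap.sub_apply, Module.End.mul_apply,
        happ, ← map_sub]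
      exact congrArg _ (pXY x)
    have hHXq : Hq * Xq - Xq * Hq = 2 • Xq := by
      apply Submodule.linearMap_qext
      ext x
      simp only [LinearMap.comp_apply, LinearMap.sub_apply, Module.End.mul_apply,
        LinearMap.smul_apply, hHqdef, hXqdef, happ, ← map_sub]
      rw [pHX x, map_nsmul]
    have hHYq : Hq * Yq - Yq * Hq = -(2 • Yq) := by
      apply Submodule.linearMap_qext
      ext x
      simp only [LinearMap.comp_apply, LinearMap.sub_apply, Module.End.mul_apply,
        LinearMap.smul_apply, LinearMap.neg_apply, hHqdef, hYqdef, happ, ← map_sub]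
      rw [pHY x, map_neg, map_nsmul]
    -- dimension drops
    have hWpos : 0 < Module.finrank ℂ W := by
      rw [Module.finrank_pos_iff]
      refine nontrivial_of_ne ⟨u, ?_⟩ 0 ?_
      · have := hwmem 0 (Nat.zero_le n)
        simpa using this
      · intro hcontra
        apply hu0
        simpa [Submodule.mk_eq_zero] using hcontra
    have hQrk : Module.finrank ℂ (V ⧸ W) ≤ N := by
      have := W.finrank_quotient_add_finrank
      omega
    -- apply induction hypothesis in the quotient
    have hvq : W.mkQ v ∈ eigenspace Hq (m : ℂ) := by
      rw [mem_eigenspace_iff, happ, mem_eigenspace_iff.mp hv, map_smul]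
    have hYvq : (Yq ^ m) (W.mkQ v) = 0 := by
      rw [← Submodule.mapQ_pow W hYW m, happ, hYv, map_zero]
    have hq0 := IH Xq Yq Hq hXYq hHXq hHYq hQrk m (W.mkQ v) hvq hYvq
    have hvW : v ∈ W := by
      rwa [Submodule.mkQ_apply, Submodule.Quotient.mk_eq_zero] at hq0
    -- now work inside W
    have li : LinearIndependent ℂ w := by
      apply H.eigenvectors_linearIndependent' (fun i : Fin (n + 1) => (n : ℂ) - 2 * (i : ℕ))
      · intro a b hab
        simp only at hab
        have h2 : ((a : ℕ) : ℂ) = ((b : ℕ) : ℂ) := by linear_combination (-1/2 : ℂ) * hab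
        have : (a : ℕ) = (b : ℕ) := by exact_mod_cast h2
        exact Fin.ext this
      · intro i
        exact ⟨hwe (i : ℕ), hne _ i.is_le⟩
    obtain ⟨c, hc⟩ := (Submodule.mem_span_range_iff_exists_fun ℂ).mp hvW
    have hli' := Fintype.linearIndependent_iff.mp li
    have hHv : H v = (m : ℂ) • v := mem_eigenspace_iff.mp hv
    have key : ∀ i, c i * ((n : ℂ) - 2 * (i : ℕ) - m) = 0 := by
      apply hli' (fun i => c i * ((n : ℂ) - 2 * (i : ℕ) - m))
      have expand : ∑ i, (c i * ((n : ℂ) - 2 * (i : ℕ) - m)) • w i = H v - (m : ℂ) • v := by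
        rw [← hc, map_sum, Finset.smul_sum, ← Finset.sum_sub_distrib]
        apply Finset.sum_congr rfl
        intro i _
        rw [map_smul, mem_eigenspace_iff.mp (hwe (i : ℕ))]
        simp only [hwdef]
        module
      rw [expand, hHv, sub_self]
    by_cases hex2 : ∃ i : Fin (n + 1), (n : ℂ) - 2 * (i : ℕ) - m = 0
    · obtain ⟨i0, hi0⟩ := hex2
      have hcz : ∀ jj, jj ≠ i0 → c jj = 0 := by
        intro jj hjj
        have hne0 : (n : ℂ) - 2 * (jj : ℕ) - m ≠ 0 := by
          intro hzz
          apply hjj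
          have h2 : ((jj : ℕ) : ℂ) = ((i0 : ℕ) : ℂ) := by linear_combination (-1/2 : ℂ) * hzz + (1/2 : ℂ) * hi0
          have : (jj : ℕ) = (i0 : ℕ) := by exact_mod_cast h2
          exact Fin.ext this
        exact (mul_eq_zero.mp (key jj)).resolve_right hne0
      have hveq : v = c i0 • w i0 := by
        rw [← hc, Finset.sum_eq_single i0]
        · intro jj _ hjj
          rw [hcz jj hjj, zero_smul]
        · intro hni
          exact absurd (Finset.mem_univ i0) hni
      have hnat : n = 2 * (i0 : ℕ) + m := by
        have h2 : ((n : ℕ) : ℂ) = ((2 * (i0 : ℕ) + m : ℕ) : ℂ) := by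
          push_cast
          linear_combination hi0
        exact_mod_cast h2
      have him : (i0 : ℕ) + m ≤ n := by have := i0.is_le; omega
      have hYmv : (Y ^ m) v = c i0 • (Y ^ ((i0 : ℕ) + m)) u := by
        rw [hveq, map_smul]
        congr 1
        rw [hwdef]
        simp only
        rw [add_comm (i0 : ℕ) m, pow_add, Module.End.mul_apply]
      rw [hYv] at hYmv
      have := (smul_eq_zero.mp hYmv.symm).resolve_right (hne _ him)
      rw [hveq, this, zero_smul]
    · push_neg at hex2
      have hcz : ∀ i, c i = 0 := fun i => (mul_eq_zero.mp (key i)).resolve_right (hex2 i)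
      rw [← hc]
      simp [hcz]

end SL2p

theorem stmt6 {V : Type*} [AddCommGroup V] [Module ℂ V] [FiniteDimensional ℂ V]
    (X Y H : Module.End ℂ V)
    (hXY : X * Y - Y * X = H)
    (hHX : H * X - X * H = 2 • X)
    (hHY : H * Y - Y * H = -(2 • Y))
    (m : ℕ) :
    (∀ v ∈ Module.End.eigenspace H (m : ℂ), (Y ^ m) v ∈ Module.End.eigenspace H (-(m : ℂ))) ∧
    (∀ v ∈ Module.End.eigenspace H (m : ℂ), (Y ^ m) v = 0 → v = 0) ∧
    (∀ w ∈ Module.End.eigenspace H (-(m : ℂ)),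
      ∃ v ∈ Module.End.eigenspace H (m : ℂ), (Y ^ m) v = w) := by
  have ha : ∀ v ∈ eigenspace H (m : ℂ), (Y ^ m) v ∈ eigenspace H (-(m : ℂ)) := by
    intro v hv
    have h := SL2p.memYpow hHY hv m
    have e : (m : ℂ) - 2 * m = -(m : ℂ) := by ring
    rwa [e] at h
  have hb : ∀ v ∈ eigenspace H (m : ℂ), (Y ^ m) v = 0 → v = 0 := by
    intro v hv h0
    exact SL2p.inj_aux (Module.finrank ℂ V) X Y H hXY hHX hHY le_rfl m v hv h0
  refine ⟨ha, hb, ?_⟩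
  -- the symmetric sl2 triple (Y, X, -H)
  have hXY' : Y * X - X * Y = -H := by
    have e : Y * X - X * Y = -(X * Y - Y * X) := by noncomm_ring
    rw [e, hXY]
  have hHX' : (-H) * Y - Y * (-H) = 2 • Y := by
    have e : (-H) * Y - Y * (-H) = -(H * Y - Y * H) := by noncomm_ring
    rw [e, hHY, neg_neg]
  have hHY' : (-H) * X - X * (-H) = -(2 • X) := by
    have e : (-H) * X - X * (-H) = -(H * X - X * H) := by noncomm_ring
    rw [e, hHX]
  have hneg : ∀ μ : ℂ, eigenspace (-H) μ = eigenspace H (-μ) := by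
    intro μ
    ext x
    simp only [mem_eigenspace_iff, LinearMap.neg_apply, neg_smul]
    exact ⟨fun h => by rw [← h, neg_neg], fun h => by rw [h, neg_neg]⟩
  have ha' : ∀ v ∈ eigenspace H (-(m : ℂ)), (X ^ m) v ∈ eigenspace H (m : ℂ) := by
    intro v hv
    have hv' : v ∈ eigenspace (-H) (m : ℂ) := by rw [hneg]; exact hv
    have h := SL2p.memYpow hHY' hv' m
    rw [hneg] at h
    have e : -((m : ℂ) - 2 * m) = (m : ℂ) := by ring
    rwa [e] at h
  have hinj' : ∀ v ∈ eigenspace H (-(m : ℂ)), (X ^ m) v = 0 → v = 0 := by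
    intro v hv h0
    apply SL2p.inj_aux (Module.finrank ℂ V) Y X (-H) hXY' hHX' hHY' le_rfl m v ?_ h0
    rw [hneg]
    exact hv
  set f : (eigenspace H (m : ℂ)) →ₗ[ℂ] (eigenspace H (-(m : ℂ))) := (Y ^ m).restrict ha with hfdef
  set g : (eigenspace H (-(m : ℂ))) →ₗ[ℂ] (eigenspace H (m : ℂ)) := (X ^ m).restrict ha' with hgdef
  have hfinj : Function.Injective f := by
    intro a b hab
    have hval : (Y ^ m) (a : V) = (Y ^ m) (b : V) := by
      have := congrArg Subtype.val hab
      simpa [hfdef, LinearMap.restrict_apply] using this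
    have h1 : (Y ^ m) ((a : V) - (b : V)) = 0 := by rw [map_sub, hval, sub_self]
    have h2 : (a : V) - (b : V) ∈ eigenspace H (m : ℂ) := sub_mem a.2 b.2
    have := hb _ h2 h1
    exact Subtype.ext (sub_eq_zero.mp this)
  have hginj : Function.Injective g := by
    intro a b hab
    have hval : (X ^ m) (a : V) = (X ^ m) (b : V) := by
      have := congrArg Subtype.val hab
      simpa [hgdef, LinearMap.restrict_apply] using this
    have h1 : (X ^ m) ((a : V) - (b : V)) = 0 := by rw [map_sub, hval, sub_self]
    have h2 : (a : V) - (b : V) ∈ eigenspace H (-(m : ℂ)) := sub_mem a.2 b.2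
    have := hinj' _ h2 h1
    exact Subtype.ext (sub_eq_zero.mp this)
  have hle1 := LinearMap.finrank_le_finrank_of_injective hfinj
  have hle2 := LinearMap.finrank_le_finrank_of_injective hginj
  have heq : Module.finrank ℂ (eigenspace H (m : ℂ)) =
      Module.finrank ℂ (eigenspace H (-(m : ℂ))) := le_antisymm hle1 hle2
  have hsurj : Function.Surjective f :=
    (LinearMap.injective_iff_surjective_of_finrank_eq_finrank heq).mp hfinj
  intro w hw
  obtain ⟨x, hx⟩ := hsurj ⟨w, hw⟩
  refine ⟨(x : V), x.2, ?_⟩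
  have := congrArg Subtype.val hx
  simpa [hfdef, LinearMap.restrict_apply] using this
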